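/- Let H be a complex inner product space with operators ∂, ∂̄ and adjoints ∂*, ∂̄*, and suppose H = K ⊕ (Im ∂ + Im ∂̄) ⊕ Im(∂∂̄)* is an orthogonal decomposition where K := ker(∂∂̄) ∩ ker ∂* ∩ ker ∂̄*. Then ker ∂* ∩ ker ∂̄* = K ⊕ Im(∂∂̄)*. -/

import Mathlib

/-- Let H be a complex inner product space with operators ∂, ∂̄ and
adjoints ∂*, ∂̄*, and suppose H = K ⊕ (Im ∂ + Im ∂̄) ⊕ Im(∂∂̄)* is an orthogonal
decomposition where K := ker(∂∂̄) ∩ ker ∂* ∩ ker ∂̄*. Then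
ker ∂* ∩ ker ∂̄* = K ⊕ Im(∂∂̄)*. Here `p, q, ps, qs, pqs` stand for ∂, ∂̄, ∂*, ∂̄*,
(∂∂̄)* respectively. -/
theorem aeppli_three_space
    {H : Type*} [NormedAddCommGroup H] [InnerProductSpace ℂ H]
    (p q ps qs pqs : H →ₗ[ℂ] H)
    (hps : ∀ x y, (inner ℂ (p x) y : ℂ) = inner ℂ x (ps y))
    (hqs : ∀ x y, (inner ℂ (q x) y : ℂ) = inner ℂ x (qs y))
    (hpqs : ∀ x y, (inner ℂ (p (q x)) y : ℂ) = inner ℂ x (pqs y))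
    (K : Submodule ℂ H)
    (hK : K = LinearMap.ker (p ∘ₗ q) ⊓ LinearMap.ker ps ⊓ LinearMap.ker qs)
    -- H = K ⊕ (Im ∂ + Im ∂̄) ⊕ Im(∂∂̄)* ...
    (hdecomp : K ⊔ (LinearMap.range p ⊔ LinearMap.range q) ⊔ LinearMap.range pqs = ⊤)
    -- ... and the decomposition is orthogonal
    (h12 : ∀ x ∈ K, ∀ y ∈ LinearMap.range p ⊔ LinearMap.range q, (inner ℂ x y : ℂ) = 0)
    (h13 : ∀ x ∈ K, ∀ y ∈ LinearMap.range pqs, (inner ℂ x y : ℂ) = 0)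
    (h23 : ∀ x ∈ LinearMap.range p ⊔ LinearMap.range q, ∀ y ∈ LinearMap.range pqs,
      (inner ℂ x y : ℂ) = 0) :
    LinearMap.ker ps ⊓ LinearMap.ker qs = K ⊔ LinearMap.range pqs := by
  apply le_antisymm
  · intro x hx
    obtain ⟨hpsx, hqsx⟩ := hx
    have hpsx' : ps x = 0 := hpsx
    have hqsx' : qs x = 0 := hqsx
    have hxtop : x ∈ (⊤ : Submodule ℂ H) := trivial
    rw [← hdecomp] at hxtop
    obtain ⟨y, hy, c, hc, hxe⟩ := Submodule.mem_sup.1 hxtop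
    obtain ⟨a, ha, b, hb, rfl⟩ := Submodule.mem_sup.1 hy
    have hb0 : b = 0 := by
      obtain ⟨u', hu, v', hv, hbe⟩ := Submodule.mem_sup.1 hb
      obtain ⟨u, rfl⟩ := hu
      obtain ⟨v, rfl⟩ := hv
      have h1 : (inner ℂ b a : ℂ) = 0 := by
        have := h12 a ha b hb
        rw [← inner_conj_symm, this, map_zero]
      have h2 : (inner ℂ b c : ℂ) = 0 := h23 _ hb c hc
      have hbx : (inner ℂ b x : ℂ) = 0 := by
        rw [← hbe, inner_add_left, hps, hqs, hpsx', hqsx',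
          inner_zero_right, inner_zero_right, add_zero]
      have hbb : (inner ℂ b b : ℂ) = 0 := by
        have : (inner ℂ b x : ℂ) = inner ℂ b a + inner ℂ b b + inner ℂ b c := by
          rw [← hxe, inner_add_right, inner_add_right]
        rw [hbx, h1, h2] at this
        simpa using this.symm
      exact inner_self_eq_zero.1 hbb
    rw [hb0, add_zero] at hxe
    exact Submodule.mem_sup.2 ⟨a, ha, c, hc, hxe⟩
  · rw [sup_le_iff]
    constructor
    · intro x hx
      rw [hK] at hx
      exact ⟨hx.1.2, hx.2⟩
    · intro x hx
      constructor
      · have h : ∀ z : H, (inner ℂ z (ps x) : ℂ) = 0 := fun z => by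
          rw [← hps]
          exact h23 (p z) (Submodule.mem_sup_left ⟨z, rfl⟩) x hx
        exact inner_self_eq_zero.1 (h (ps x))
      · have h : ∀ z : H, (inner ℂ z (qs x) : ℂ) = 0 := fun z => by
          rw [← hqs]
          exact h23 (q z) (Submodule.mem_sup_right ⟨z, rfl⟩) x hx
        exact inner_self_eq_zero.1 (h (qs x))
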